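/- Let σ, σ0, τ0 > 0, z ≥ 0, N a positive integer, and b > 0. Define R_b(β) = E_{τ ~ N(τ0, σ0²)}[τ · Φ((Nτ + τ0β)/(√N σ b) − z)], where Φ is the standard normal CDF. Then the unique maximizer of R_b over β ∈ [0, ∞) is β*(b) = σ²b²/σ0² + √N z σ b/τ0, and R_b(β*(b)) ≥ R_b(0). -/

import Mathlib

open Real MeasureTheory

/-- Standard normal CDF. -/
noncomputable def Phi (x : ℝ) : ℝ :=
  ∫ t in Set.Iic x, (Real.sqrt (2 * Real.pi))⁻¹ * Real.exp (-t ^ 2 / 2)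

/-- Density of a normal distribution with mean `μ` and variance `v`. -/
noncomputable def gpdf (μ v x : ℝ) : ℝ :=
  (Real.sqrt (2 * Real.pi * v))⁻¹ * Real.exp (-(x - μ) ^ 2 / (2 * v))



lemma gpdf_pos {μ v : ℝ} (hv : 0 < v) (x : ℝ) : 0 < gpdf μ v x := by
  unfold gpdf
  positivity

lemma gpdf_nonneg (μ v x : ℝ) : 0 ≤ gpdf μ v x := by
  unfold gpdf; positivity

lemma continuous_gpdf (μ v : ℝ) : Continuous (gpdf μ v) := by
  unfold gpdf
  fun_prop

lemma gpdf_eq_gaussianPDFReal {v : ℝ} (hv : 0 ≤ v) (μ : ℝ) :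
    gpdf μ v = ProbabilityTheory.gaussianPDFReal μ v.toNNReal := by
  funext x
  simp [gpdf, ProbabilityTheory.gaussianPDFReal, Real.coe_toNNReal v hv]

lemma integrable_gpdf (μ : ℝ) {v : ℝ} (hv : 0 < v) : Integrable (gpdf μ v) := by
  rw [gpdf_eq_gaussianPDFReal hv.le]
  exact ProbabilityTheory.integrable_gaussianPDFReal μ v.toNNReal

lemma integral_gpdf (μ : ℝ) {v : ℝ} (hv : 0 < v) : ∫ x, gpdf μ v x = 1 := by
  rw [gpdf_eq_gaussianPDFReal hv.le]
  exact ProbabilityTheory.integral_gaussianPDFReal_eq_one μ ((Real.toNNReal_pos.mpr hv).ne')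

lemma integrable_id_mul_gpdf (μ : ℝ) {v : ℝ} (hv : 0 < v) :
    Integrable (fun x => x * gpdf μ v x) := by
  have hb : 0 < (2 * v)⁻¹ := by positivity
  have h1 : Integrable (fun y : ℝ => (y + μ) * Real.exp (-(2*v)⁻¹ * y ^ 2)) := by
    have := (integrable_mul_exp_neg_mul_sq hb).add
      ((integrable_exp_neg_mul_sq hb).const_mul μ)
    refine this.congr ?_
    filter_upwards with y; simp only [Pi.add_apply]; ring
  have h2 := h1.comp_sub_right μ
  have h3 := h2.const_mul ((Real.sqrt (2 * Real.pi * v))⁻¹)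
  refine h3.congr ?_
  filter_upwards with x
  unfold gpdf
  have : -(2*v)⁻¹ * (x - μ)^2 = -(x - μ)^2 / (2*v) := by field_simp
  rw [sub_add_cancel, this]; ring

lemma integral_id_mul_gpdf (μ : ℝ) {v : ℝ} (hv : 0 < v) :
    ∫ x, x * gpdf μ v x = μ := by
  have hb : 0 < (2 * v)⁻¹ := by positivity
  have hodd : ∫ y : ℝ, y * Real.exp (-(2*v)⁻¹ * y ^ 2) = 0 := by
    have h := MeasureTheory.integral_neg_eq_self
      (fun y : ℝ => y * Real.exp (-(2*v)⁻¹ * y ^ 2)) volume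
    simp only [neg_sq, neg_mul] at h
    rw [integral_neg] at h
    simp only [neg_mul]
    linarith
  have key : ∀ x : ℝ, x * gpdf μ v x
      = ((Real.sqrt (2 * Real.pi * v))⁻¹) *
        ((fun y => (y + μ) * Real.exp (-(2*v)⁻¹ * y ^ 2)) (x - μ)) := by
    intro x
    unfold gpdf
    have h2 : x - μ + μ = x := by ring
    have : -(2*v)⁻¹ * (x - μ)^2 = -(x - μ)^2 / (2*v) := by field_simp
    beta_reduce
    rw [h2, this]; ring
  simp_rw [key]
  rw [integral_const_mul, MeasureTheory.integral_sub_right_eq_self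
    (fun y => (y + μ) * Real.exp (-(2*v)⁻¹ * y ^ 2)) μ]
  have hsplit : ∫ y : ℝ, (y + μ) * Real.exp (-(2*v)⁻¹ * y ^ 2)
      = (∫ y : ℝ, y * Real.exp (-(2*v)⁻¹ * y ^ 2))
        + μ * ∫ y : ℝ, Real.exp (-(2*v)⁻¹ * y ^ 2) := by
    rw [← integral_const_mul, ← integral_add (integrable_mul_exp_neg_mul_sq hb)
      ((integrable_exp_neg_mul_sq hb).const_mul μ)]
    congr 1; funext y; ring
  rw [hsplit, hodd, zero_add]
  -- (√(2πv))⁻¹ * (μ * ∫ exp) = μ  since ∫ gpdf = 1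
  have hnorm := integral_gpdf μ hv
  unfold gpdf at hnorm
  rw [integral_const_mul] at hnorm
  have : ∫ x : ℝ, Real.exp (-(x - μ) ^ 2 / (2 * v))
      = ∫ y : ℝ, Real.exp (-(2*v)⁻¹ * y ^ 2) := by
    rw [← MeasureTheory.integral_sub_right_eq_self
      (fun y => Real.exp (-(2*v)⁻¹ * y ^ 2)) μ]
    congr 1; funext x
    congr 1; field_simp
  rw [this] at hnorm
  linear_combination μ * hnorm

-- Phi properties
lemma Phi_eq (x : ℝ) : Phi x = ∫ t in Set.Iic x, gpdf 0 1 t := by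
  unfold Phi gpdf; norm_num

lemma Phi_nonneg (x : ℝ) : 0 ≤ Phi x := by
  rw [Phi_eq]
  exact setIntegral_nonneg measurableSet_Iic (fun t _ => gpdf_nonneg 0 1 t)

lemma Phi_le_one (x : ℝ) : Phi x ≤ 1 := by
  rw [Phi_eq]
  calc ∫ t in Set.Iic x, gpdf 0 1 t ≤ ∫ t, gpdf 0 1 t := by
        apply setIntegral_le_integral (integrable_gpdf 0 one_pos)
        filter_upwards with t using gpdf_nonneg 0 1 t
    _ = 1 := integral_gpdf 0 one_pos

lemma hasDerivAt_Phi (x : ℝ) : HasDerivAt Phi (gpdf 0 1 x) x := by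
  have hint : Integrable (gpdf 0 1) := integrable_gpdf 0 one_pos
  have hPhi : Phi = fun y => (∫ t in Set.Iic (0:ℝ), gpdf 0 1 t) +
      ∫ t in (0:ℝ)..y, gpdf 0 1 t := by
    funext y
    rw [Phi_eq]
    have := intervalIntegral.integral_Iic_sub_Iic (hint.integrableOn) (hint.integrableOn) (a := 0) (b := y)
    linarith
  rw [hPhi]
  have h := intervalIntegral.integral_hasDerivAt_right
    (hint.intervalIntegrable (a := 0) (b := x))
    ((continuous_gpdf 0 1).stronglyMeasurableAtFilter _ _)
    ((continuous_gpdf 0 1).continuousAt)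
  exact h.const_add _

lemma continuous_Phi : Continuous Phi := by
  have : ∀ x : ℝ, ContinuousAt Phi x := fun x => (hasDerivAt_Phi x).continuousAt
  exact continuous_iff_continuousAt.mpr this

lemma gpdf_le (x : ℝ) : gpdf 0 1 x ≤ (Real.sqrt (2 * Real.pi))⁻¹ := by
  unfold gpdf
  rw [mul_one]
  have h1 : Real.exp (-(x - 0) ^ 2 / (2 * 1)) ≤ 1 := by
    rw [Real.exp_le_one_iff]
    nlinarith [sq_nonneg (x - 0)]
  nlinarith [Real.sqrt_nonneg (2 * Real.pi), inv_nonneg.mpr (Real.sqrt_nonneg (2 * Real.pi)), h1]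
-- Gaussian product identity
lemma gauss_prod (μ0 k m : ℝ) {v : ℝ} (hv : 0 < v) (τ : ℝ) :
    gpdf μ0 v τ * gpdf 0 1 (k*τ + m) =
      gpdf ((μ0/v - k*m)/(1/v + k^2)) ((1/v + k^2)⁻¹) τ * gpdf 0 (1 + k^2*v) (k*μ0 + m) := by
  have hA : 0 < 1/v + k^2 := by positivity
  have hV : 0 < 1 + k^2*v := by positivity
  have hπ : 0 < Real.pi := Real.pi_pos
  unfold gpdf
  have pref : (Real.sqrt (2*Real.pi*v))⁻¹ * (Real.sqrt (2*Real.pi*1))⁻¹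
      = (Real.sqrt (2*Real.pi*(1/v + k^2)⁻¹))⁻¹ * (Real.sqrt (2*Real.pi*(1+k^2*v)))⁻¹ := by
    rw [← mul_inv, ← mul_inv, ← Real.sqrt_mul (by positivity), ← Real.sqrt_mul (by positivity)]
    congr 2
    field_simp
  have expo : -(τ - μ0)^2 / (2*v) + -(k*τ + m - 0)^2 / (2*1)
      = -(τ - (μ0/v - k*m)/(1/v + k^2))^2 / (2*(1/v + k^2)⁻¹)
        + -(k*μ0 + m - 0)^2 / (2*(1+k^2*v)) := by
    field_simp
    ring
  calc (Real.sqrt (2*Real.pi*v))⁻¹ * Real.exp (-(τ - μ0)^2 / (2*v)) *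
        ((Real.sqrt (2*Real.pi*1))⁻¹ * Real.exp (-(k*τ + m - 0)^2 / (2*1)))
      = ((Real.sqrt (2*Real.pi*v))⁻¹ * (Real.sqrt (2*Real.pi*1))⁻¹) *
        Real.exp (-(τ - μ0)^2 / (2*v) + -(k*τ + m - 0)^2 / (2*1)) := by
        rw [Real.exp_add]; ring
    _ = ((Real.sqrt (2*Real.pi*(1/v + k^2)⁻¹))⁻¹ * (Real.sqrt (2*Real.pi*(1+k^2*v)))⁻¹) *
        Real.exp (-(τ - (μ0/v - k*m)/(1/v + k^2))^2 / (2*(1/v + k^2)⁻¹)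
          + -(k*μ0 + m - 0)^2 / (2*(1+k^2*v))) := by rw [pref, expo]
    _ = _ := by rw [Real.exp_add]; ring

lemma integral_g (μ0 k m : ℝ) {v : ℝ} (hv : 0 < v) :
    ∫ τ : ℝ, gpdf μ0 v τ * (τ * gpdf 0 1 (k*τ + m)) =
      gpdf 0 (1+k^2*v) (k*μ0+m) * ((μ0/v - k*m)/(1/v + k^2)) := by
  have hA : 0 < (1/v + k^2)⁻¹ := by positivity
  have h1 : ∀ τ : ℝ, gpdf μ0 v τ * (τ * gpdf 0 1 (k*τ + m))
      = gpdf 0 (1+k^2*v) (k*μ0+m) * (τ * gpdf ((μ0/v - k*m)/(1/v + k^2)) ((1/v + k^2)⁻¹) τ) := by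
    intro τ
    have := gauss_prod μ0 k m hv τ
    linear_combination τ * this
  simp_rw [h1]
  rw [integral_const_mul, integral_id_mul_gpdf _ hA]
lemma hasDerivAt_R (μ0 k z : ℝ) {v q : ℝ} (hv : 0 < v) (hq : 0 < q) (β₀ : ℝ) :
    HasDerivAt (fun β => ∫ τ : ℝ, gpdf μ0 v τ * (τ * Phi (k*τ + q*β - z)))
      ((gpdf 0 (1+k^2*v) (k*μ0 + q*β₀ - z) * ((μ0/v - k*(q*β₀-z))/(1/v + k^2))) * q) β₀ := by
  have hint : Integrable (fun τ : ℝ => τ * gpdf μ0 v τ) := integrable_id_mul_gpdf μ0 hv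
  set F : ℝ → ℝ → ℝ := fun β τ => gpdf μ0 v τ * (τ * Phi (k*τ + q*β - z)) with hF
  set F' : ℝ → ℝ → ℝ := fun β τ => gpdf μ0 v τ * (τ * (gpdf 0 1 (k*τ + q*β - z) * q)) with hF'
  set bound : ℝ → ℝ := fun τ => |τ * gpdf μ0 v τ| * ((Real.sqrt (2*Real.pi))⁻¹ * q) with hbd
  have hcontF : ∀ β, Continuous (F β) := by
    intro β
    apply (continuous_gpdf μ0 v).mul
    exact continuous_id.mul (continuous_Phi.comp (by fun_prop))
  have hcontF' : ∀ β, Continuous (F' β) := by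
    intro β
    apply (continuous_gpdf μ0 v).mul
    apply continuous_id.mul
    exact (((continuous_gpdf 0 1).comp (by fun_prop)).mul continuous_const)
  have key := hasDerivAt_integral_of_dominated_loc_of_deriv_le (F := F) (F' := F')
    (x₀ := β₀) (bound := bound) (s := Metric.ball β₀ 1) (μ := volume) (Metric.ball_mem_nhds β₀ one_pos)
    (Filter.Eventually.of_forall (fun β => (hcontF β).aestronglyMeasurable))
    ?hint ((hcontF' β₀).aestronglyMeasurable) ?hbound ?hbint ?hdiff
  · have h2 : ∫ τ : ℝ, F' β₀ τ
        = (∫ τ : ℝ, gpdf μ0 v τ * (τ * gpdf 0 1 (k*τ + (q*β₀ - z)))) * q := by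
      rw [← integral_mul_const]
      congr 1; funext τ
      simp only [hF']
      ring_nf
    have h3 := key.2
    rw [h2, integral_g μ0 k (q*β₀ - z) hv] at h3
    exact h3.congr_deriv (by ring_nf)
  case hint =>
    apply hint.abs.mono (hcontF β₀).aestronglyMeasurable
    filter_upwards with τ
    simp only [hF, Real.norm_eq_abs, abs_abs]
    rw [abs_mul, abs_mul]
    have h0 := gpdf_nonneg μ0 v τ
    have h1 := Phi_nonneg (k*τ + q*β₀ - z)
    have h2 := Phi_le_one (k*τ + q*β₀ - z)
    rw [abs_of_nonneg h0, abs_of_nonneg h1]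
    calc gpdf μ0 v τ * (|τ| * Phi (k*τ + q*β₀ - z)) ≤ gpdf μ0 v τ * (|τ| * 1) := by
          apply mul_le_mul_of_nonneg_left _ h0
          exact mul_le_mul_of_nonneg_left h2 (abs_nonneg τ)
      _ = |τ| * gpdf μ0 v τ := by ring
      _ = |τ * gpdf μ0 v τ| := by rw [abs_mul, abs_of_nonneg h0]
  case hbound =>
    filter_upwards with τ
    intro β _
    simp only [hF', hbd, Real.norm_eq_abs]
    have h0 := gpdf_nonneg μ0 v τ
    have h1 := gpdf_nonneg 0 1 (k*τ + q*β - z)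
    have h2 := gpdf_le (k*τ + q*β - z)
    rw [abs_mul, abs_mul, abs_mul, abs_of_nonneg h0, abs_of_nonneg h1, abs_of_nonneg hq.le,
      abs_mul, abs_of_nonneg h0]
    have h3 : 0 ≤ |τ| := abs_nonneg τ
    calc gpdf μ0 v τ * (|τ| * (gpdf 0 1 (k*τ + q*β - z) * q))
        ≤ gpdf μ0 v τ * (|τ| * ((Real.sqrt (2*Real.pi))⁻¹ * q)) := by
          apply mul_le_mul_of_nonneg_left _ h0
          apply mul_le_mul_of_nonneg_left _ h3
          exact mul_le_mul_of_nonneg_right h2 hq.le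
      _ = |τ| * gpdf μ0 v τ * ((Real.sqrt (2*Real.pi))⁻¹ * q) := by ring
  case hbint =>
    exact hint.abs.mul_const _
  case hdiff =>
    filter_upwards with τ
    intro β _
    have haff : HasDerivAt (fun β : ℝ => k*τ + q*β - z) q β := by
      simpa using (((hasDerivAt_id β).const_mul q).const_add (k*τ)).sub_const z
    have hPhi := (hasDerivAt_Phi (k*τ + q*β - z)).comp β haff
    have h2 := (hPhi.const_mul τ).const_mul (gpdf μ0 v τ)
    exact h2

theorem stmt_15 (σ σ0 τ0 z : ℝ) (hσ : 0 < σ) (hσ0 : 0 < σ0) (hτ0 : 0 < τ0)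
    (hz : 0 ≤ z) (N : ℕ) (hN : 0 < N) (b : ℝ) (hb : 0 < b)
    (R : ℝ → ℝ)
    (hR : R = fun β => ∫ τ : ℝ, gpdf τ0 (σ0 ^ 2) τ *
      (τ * Phi ((N * τ + τ0 * β) / (Real.sqrt N * σ * b) - z)))
    (βstar : ℝ) (hβstar : βstar = σ ^ 2 * b ^ 2 / σ0 ^ 2 + Real.sqrt N * z * σ * b / τ0) :
    (∀ β : ℝ, 0 ≤ β → R β ≤ R βstar) ∧
      (∀ β : ℝ, 0 ≤ β → β ≠ βstar → R β < R βstar) ∧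
      R 0 ≤ R βstar := by
  set s := Real.sqrt (N:ℝ) with hs_def
  have hsN : s^2 = (N:ℝ) := Real.sq_sqrt (Nat.cast_nonneg N)
  have hNpos : (0:ℝ) < (N:ℝ) := by exact_mod_cast hN
  have hs : 0 < s := Real.sqrt_pos.mpr hNpos
  set a := s * σ * b with ha_def
  have ha : 0 < a := by positivity
  set k := (N:ℝ)/a with hk_def
  set q := τ0/a with hq_def
  have hk : 0 < k := div_pos hNpos ha
  have hq : 0 < q := div_pos hτ0 ha
  have hv : 0 < σ0^2 := by positivity
  have hV : 0 < 1 + k^2*σ0^2 := by positivity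
  have hA : 0 < 1/σ0^2 + k^2 := by positivity
  have hβpos : 0 < βstar := by
    rw [hβstar]
    have h1 : 0 < σ^2*b^2/σ0^2 := by positivity
    have h2 : 0 ≤ s*z*σ*b/τ0 := by positivity
    linarith
  have hRe : R = fun β => ∫ τ : ℝ, gpdf τ0 (σ0^2) τ * (τ * Phi (k*τ + q*β - z)) := by
    rw [hR]
    funext β
    congr 1
    funext τ
    have harg : ((N:ℝ)*τ + τ0*β)/a - z = k*τ + q*β - z := by
      rw [hk_def, hq_def]
      field_simp
    rw [harg]
  have hRderiv : ∀ β, HasDerivAt R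
      ((gpdf 0 (1+k^2*σ0^2) (k*τ0 + q*β - z) * ((τ0/σ0^2 - k*(q*β-z))/(1/σ0^2 + k^2))) * q) β := by
    rw [hRe]
    exact fun β => hasDerivAt_R τ0 k z hv hq β
  have hlin : ∀ β : ℝ, τ0/σ0^2 - k*(q*β - z) = (k*q)*(βstar - β) := by
    intro β
    rw [hk_def, hq_def, hβstar, ha_def, ← hsN]
    field_simp
    ring
  have hderiv_val : ∀ β : ℝ, deriv R β
      = (gpdf 0 (1+k^2*σ0^2) (k*τ0 + q*β - z) * (((k*q)*(βstar - β))/(1/σ0^2 + k^2))) * q := by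
    intro β
    rw [(hRderiv β).deriv, hlin β]
  have hcontR : ContinuousOn R Set.univ := by
    apply Continuous.continuousOn
    exact continuous_iff_continuousAt.mpr (fun β => (hRderiv β).differentiableAt.continuousAt)
  have hmono : StrictMonoOn R (Set.Icc 0 βstar) := by
    apply strictMonoOn_of_deriv_pos (convex_Icc 0 βstar) (hcontR.mono (Set.subset_univ _))
    intro x hx
    rw [interior_Icc] at hx
    rw [hderiv_val x]
    have hg := gpdf_pos (μ := 0) hV (k*τ0 + q*x - z)
    have h1 : 0 < βstar - x := by linarith [hx.2]
    positivity
  have hanti : StrictAntiOn R (Set.Ici βstar) := by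
    apply strictAntiOn_of_deriv_neg (convex_Ici βstar) (hcontR.mono (Set.subset_univ _))
    intro x hx
    rw [interior_Ici] at hx
    rw [hderiv_val x]
    have hg := gpdf_pos (μ := 0) hV (k*τ0 + q*x - z)
    have h1 : βstar - x < 0 := by simpa using sub_neg.mpr (show βstar < x from hx)
    have h2 : (k*q)*(βstar - x) < 0 := mul_neg_of_pos_of_neg (by positivity) h1
    have h3 : ((k*q)*(βstar - x))/(1/σ0^2 + k^2) < 0 := div_neg_of_neg_of_pos h2 hA
    have h4 : gpdf 0 (1+k^2*σ0^2) (k*τ0 + q*x - z) * (((k*q)*(βstar - x))/(1/σ0^2 + k^2)) < 0 :=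
      mul_neg_of_pos_of_neg hg h3
    exact mul_neg_of_neg_of_pos h4 hq
  have hlt : ∀ β : ℝ, 0 ≤ β → β ≠ βstar → R β < R βstar := by
    intro β hβ0 hne
    rcases lt_trichotomy β βstar with h | h | h
    · exact hmono ⟨hβ0, h.le⟩ ⟨hβpos.le, le_refl _⟩ h
    · exact absurd h hne
    · exact hanti (Set.self_mem_Ici) (le_of_lt h) h
  refine ⟨?_, hlt, ?_⟩
  · intro β hβ0
    by_cases hne : β = βstar
    · rw [hne]
    · exact (hlt β hβ0 hne).le
  · by_cases hne : (0:ℝ) = βstar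
    · rw [hne]
    · exact (hlt 0 le_rfl hne).le
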